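/- Let [[A, B],[B*, C]] be a positive semidefinite 2×2 block matrix with k×k blocks. Then for every positive integer r, (tr A · tr C)^r − (tr B* · tr B)^r ≥ |(tr(AC))^r − (tr(B*B))^r|, and also (tr A · tr C)^r + (tr B* · tr B)^r ≥ (tr(AC))^r + (tr(B*B))^r. -/

import Mathlib

open Matrix BigOperators ComplexOrder

namespace Stmt18Helper

open Finset



lemma pow_add_expand (x t : ℝ) (r : ℕ) :
    (x + t) ^ r = x ^ r + ∑ k ∈ Finset.range r, x ^ k * t ^ (r - k) * (r.choose k) := by
  rw [add_pow, Finset.sum_range_succ, Nat.choose_self, Nat.sub_self]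
  push_cast
  ring

lemma diff_mono {x y t : ℝ} (hx : 0 ≤ x) (hxy : x ≤ y) (ht : 0 ≤ t) (r : ℕ) :
    (x + t) ^ r + y ^ r ≤ (y + t) ^ r + x ^ r := by
  have h : ∑ k ∈ Finset.range r, x ^ k * t ^ (r - k) * (r.choose k)
      ≤ ∑ k ∈ Finset.range r, y ^ k * t ^ (r - k) * (r.choose k) := by
    refine Finset.sum_le_sum fun k _ => ?_
    have h0 := pow_le_pow_left₀ hx hxy k
    have h1 : (0:ℝ) ≤ t ^ (r - k) := pow_nonneg ht _
    have h2 : (0:ℝ) ≤ (r.choose k : ℝ) := Nat.cast_nonneg _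
    exact mul_le_mul_of_nonneg_right (mul_le_mul_of_nonneg_right h0 h1) h2
  rw [pow_add_expand x t r, pow_add_expand y t r]
  linarith

lemma sum_pow_aux {a b c d : ℝ} (hb : 0 ≤ b) (hc : 0 ≤ c) (hd : 0 ≤ d)
    (hdc : d ≤ c) (h1 : c + d ≤ a + b) (h2 : c - d ≤ a - b) (r : ℕ) :
    c ^ r + d ^ r ≤ a ^ r + b ^ r := by
  have hca : c ≤ a := by linarith
  rcases le_or_gt d b with hdb | hbd
  · have e1 := pow_le_pow_left₀ hc hca r
    have e2 := pow_le_pow_left₀ hd hdb r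
    linarith
  · have hbc : b ≤ c := by linarith
    have h := diff_mono hb hbc (t := d - b) (by linarith) r
    have e1 : b + (d - b) = d := by ring
    rw [e1] at h
    have h3 : c + (d - b) ≤ a := by linarith
    have e2 := pow_le_pow_left₀ (by linarith : (0:ℝ) ≤ c + (d - b)) h3 r
    linarith

lemma diff_pow_aux {a b c d : ℝ} (hb : 0 ≤ b) (hc : 0 ≤ c) (hd : 0 ≤ d)
    (hdc : d ≤ c) (h1 : c + d ≤ a + b) (h2 : c - d ≤ a - b) (r : ℕ) :
    c ^ r - d ^ r ≤ a ^ r - b ^ r := by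
  have hca : c ≤ a := by linarith
  have h := diff_mono hd (show d ≤ a - c + d by linarith) (t := c - d) (by linarith) r
  have e1 : d + (c - d) = c := by ring
  have e2 : a - c + d + (c - d) = a := by ring
  rw [e1, e2] at h
  have e3 := pow_le_pow_left₀ hb (show b ≤ a - c + d by linarith) r
  linarith

lemma scalar_main {a b c d : ℝ} (hb : 0 ≤ b) (hc : 0 ≤ c) (hd : 0 ≤ d)
    (h1 : c + d ≤ a + b) (h2 : |c - d| ≤ a - b) (r : ℕ) :
    c ^ r + d ^ r ≤ a ^ r + b ^ r ∧ |c ^ r - d ^ r| ≤ a ^ r - b ^ r := by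
  rw [abs_sub_le_iff] at h2
  obtain ⟨h2a, h2b⟩ := h2
  have hba : b ≤ a := by linarith
  rcases le_total d c with hdc | hcd
  · refine ⟨sum_pow_aux hb hc hd hdc h1 h2a r, ?_⟩
    rw [abs_sub_le_iff]
    refine ⟨diff_pow_aux hb hc hd hdc h1 h2a r, ?_⟩
    have e1 := pow_le_pow_left₀ hd hdc r
    have e2 := pow_le_pow_left₀ hb hba r
    linarith
  · have hs := sum_pow_aux hb hd hc hcd (by linarith) (by linarith) r
    refine ⟨by linarith, ?_⟩
    rw [abs_sub_le_iff]
    constructor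
    · have e1 := pow_le_pow_left₀ hc hcd r
      have e2 := pow_le_pow_left₀ hb hba r
      linarith
    · exact diff_pow_aux hb hd hc hcd (by linarith) (by linarith) r


variable {ι κ : Type*} [Fintype ι] [Fintype κ]


lemma sum4_swap_st {M : Type*} [AddCommMonoid M] (f : ι → ι → κ → κ → M) :
    (∑ s, ∑ t, ∑ i, ∑ j, f s t i j) = ∑ s, ∑ t, ∑ i, ∑ j, f t s i j :=
  Finset.sum_comm

lemma sum4_swap_ij {M : Type*} [AddCommMonoid M] (f : ι → ι → κ → κ → M) :
    (∑ s, ∑ t, ∑ i, ∑ j, f s t i j) = ∑ s, ∑ t, ∑ i, ∑ j, f s t j i :=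
  Finset.sum_congr rfl fun _ _ => Finset.sum_congr rfl fun _ _ => Finset.sum_comm

lemma sum4_swap_both {M : Type*} [AddCommMonoid M] (f : ι → ι → κ → κ → M) :
    (∑ s, ∑ t, ∑ i, ∑ j, f s t i j) = ∑ s, ∑ t, ∑ i, ∑ j, f t s j i :=
  (sum4_swap_st f).trans (sum4_swap_ij fun s t i j => f t s i j)

/-- symmetrization principle -/
lemma sum4_sym_eq (g F : ι → ι → κ → κ → ℂ)
    (hpt : ∀ s t i j, g s t i j + g t s j i + g s t j i + g t s i j
        = F s t i j + F t s j i + F s t j i + F t s i j) :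
    (∑ s, ∑ t, ∑ i, ∑ j, g s t i j) = ∑ s, ∑ t, ∑ i, ∑ j, F s t i j := by
  have key : ∀ G : ι → ι → κ → κ → ℂ,
      (∑ s, ∑ t, ∑ i, ∑ j, (G s t i j + G t s j i + G s t j i + G t s i j))
        = 4 * ∑ s, ∑ t, ∑ i, ∑ j, G s t i j := by
    intro G
    have e1 : (∑ s, ∑ t, ∑ i, ∑ j, G t s j i) = ∑ s, ∑ t, ∑ i, ∑ j, G s t i j :=
      (sum4_swap_both G).symm
    have e2 : (∑ s, ∑ t, ∑ i, ∑ j, G s t j i) = ∑ s, ∑ t, ∑ i, ∑ j, G s t i j :=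
      (sum4_swap_ij G).symm
    have e3 : (∑ s, ∑ t, ∑ i, ∑ j, G t s i j) = ∑ s, ∑ t, ∑ i, ∑ j, G s t i j :=
      (sum4_swap_st G).symm
    simp only [Finset.sum_add_distrib]
    rw [e1, e2, e3]
    ring
  have h4 : (4:ℂ) * (∑ s, ∑ t, ∑ i, ∑ j, g s t i j)
      = 4 * ∑ s, ∑ t, ∑ i, ∑ j, F s t i j := by
    rw [← key g, ← key F]
    exact Finset.sum_congr rfl fun s _ => Finset.sum_congr rfl fun t _ =>
      Finset.sum_congr rfl fun i _ => Finset.sum_congr rfl fun j _ => hpt s t i j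
  exact mul_left_cancel₀ (by norm_num) h4

/-- The core identity (tensor-square + swap trick, in coordinates). -/
lemma master_id (P Q : ι → κ → ℂ) (e₁ e₂ : ℂ)
    (h1 : e₁ = 1 ∨ e₁ = -1) (h2 : e₂ = 1 ∨ e₂ = -1) :
    (∑ s, ∑ t, ∑ i, ∑ j,
        (P s i * Q t j + e₁ * (Q s i * P t j) + e₂ * (P s j * Q t i)
            + e₁ * e₂ * (Q s j * P t i)) *
          starRingEnd ℂ (P s i * Q t j + e₁ * (Q s i * P t j) + e₂ * (P s j * Q t i)
            + e₁ * e₂ * (Q s j * P t i)))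
      = ∑ s, ∑ t, ∑ i, ∑ j,
          (4 * (starRingEnd ℂ (P s i) * P s i * (starRingEnd ℂ (Q t j) * Q t j))
          + 4 * e₁ * (P s i * starRingEnd ℂ (Q s i) * (starRingEnd ℂ (P t j) * Q t j))
          + 4 * e₂ * (starRingEnd ℂ (P s i) * P s j * (starRingEnd ℂ (Q t j) * Q t i))
          + 4 * (e₁ * e₂) * (P s i * starRingEnd ℂ (Q s j) * (starRingEnd ℂ (P t i) * Q t j))) := by
  refine sum4_sym_eq _ _ ?_
  intro s t i j
  rcases h1 with rfl | rfl <;> rcases h2 with rfl | rfl <;>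
    simp only [map_add, _root_.map_mul, _root_.map_one, map_neg, one_mul, neg_mul, mul_neg, neg_neg] <;>
    ring


lemma sum4_swap_halves {M : Type*} [AddCommMonoid M] (f : ι → ι → κ → κ → M) :
    (∑ i, ∑ j, ∑ s, ∑ t, f s t i j) = ∑ s, ∑ t, ∑ i, ∑ j, f s t i j :=
  calc (∑ i, ∑ j, ∑ s, ∑ t, f s t i j)
      = ∑ i, ∑ s, ∑ j, ∑ t, f s t i j :=
        Finset.sum_congr rfl fun _ _ => Finset.sum_comm
    _ = ∑ s, ∑ i, ∑ j, ∑ t, f s t i j := Finset.sum_comm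
    _ = ∑ s, ∑ i, ∑ t, ∑ j, f s t i j :=
        Finset.sum_congr rfl fun _ _ => Finset.sum_congr rfl fun _ _ => Finset.sum_comm
    _ = ∑ s, ∑ t, ∑ i, ∑ j, f s t i j :=
        Finset.sum_congr rfl fun _ _ => Finset.sum_comm

lemma expand_mul (f g : ι → κ → ℂ) :
    (∑ s, ∑ i, f s i) * (∑ t, ∑ j, g t j) = ∑ s, ∑ t, ∑ i, ∑ j, f s i * g t j := by
  rw [Fintype.sum_mul_sum]
  exact Finset.sum_congr rfl fun s _ => Finset.sum_congr rfl fun t _ =>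
    Fintype.sum_mul_sum _ _

lemma master (P Q : ι → κ → ℂ) (e₁ e₂ : ℝ)
    (h1 : e₁ = 1 ∨ e₁ = -1) (h2 : e₂ = 1 ∨ e₂ = -1) :
    0 ≤ (∑ s, ∑ t, ∑ i, ∑ j, starRingEnd ℂ (P s i) * P s i * (starRingEnd ℂ (Q t j) * Q t j)).re
      + e₁ * (∑ s, ∑ t, ∑ i, ∑ j, P s i * starRingEnd ℂ (Q s i) * (starRingEnd ℂ (P t j) * Q t j)).re
      + e₂ * (∑ s, ∑ t, ∑ i, ∑ j, starRingEnd ℂ (P s i) * P s j * (starRingEnd ℂ (Q t j) * Q t i)).re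
      + e₁ * e₂ * (∑ s, ∑ t, ∑ i, ∑ j, P s i * starRingEnd ℂ (Q s j) * (starRingEnd ℂ (P t i) * Q t j)).re := by
  have h1' : (e₁:ℂ) = 1 ∨ (e₁:ℂ) = -1 := by
    rcases h1 with rfl | rfl <;> [left; right] <;> norm_num
  have h2' : (e₂:ℂ) = 1 ∨ (e₂:ℂ) = -1 := by
    rcases h2 with rfl | rfl <;> [left; right] <;> norm_num
  have hid := master_id P Q (e₁:ℂ) (e₂:ℂ) h1' h2'
  have hpos : 0 ≤ (∑ s, ∑ t, ∑ i, ∑ j,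
        (P s i * Q t j + (e₁:ℂ) * (Q s i * P t j) + (e₂:ℂ) * (P s j * Q t i)
            + (e₁:ℂ) * (e₂:ℂ) * (Q s j * P t i)) *
          starRingEnd ℂ (P s i * Q t j + (e₁:ℂ) * (Q s i * P t j) + (e₂:ℂ) * (P s j * Q t i)
            + (e₁:ℂ) * (e₂:ℂ) * (Q s j * P t i))).re := by
    simp only [Complex.re_sum]
    refine sum_nonneg fun s _ => sum_nonneg fun t _ => sum_nonneg fun i _ =>
      sum_nonneg fun j _ => ?_
    rw [Complex.mul_conj]
    simp only [Complex.ofReal_re]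
    exact Complex.normSq_nonneg _
  have hsplit : (∑ s, ∑ t, ∑ i, ∑ j,
          (4 * (starRingEnd ℂ (P s i) * P s i * (starRingEnd ℂ (Q t j) * Q t j))
          + 4 * (e₁:ℂ) * (P s i * starRingEnd ℂ (Q s i) * (starRingEnd ℂ (P t j) * Q t j))
          + 4 * (e₂:ℂ) * (starRingEnd ℂ (P s i) * P s j * (starRingEnd ℂ (Q t j) * Q t i))
          + 4 * ((e₁:ℂ) * (e₂:ℂ)) * (P s i * starRingEnd ℂ (Q s j) * (starRingEnd ℂ (P t i) * Q t j))))
      = 4 * (∑ s, ∑ t, ∑ i, ∑ j, starRingEnd ℂ (P s i) * P s i * (starRingEnd ℂ (Q t j) * Q t j))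
      + 4 * (e₁:ℂ) * (∑ s, ∑ t, ∑ i, ∑ j, P s i * starRingEnd ℂ (Q s i) * (starRingEnd ℂ (P t j) * Q t j))
      + 4 * (e₂:ℂ) * (∑ s, ∑ t, ∑ i, ∑ j, starRingEnd ℂ (P s i) * P s j * (starRingEnd ℂ (Q t j) * Q t i))
      + 4 * ((e₁:ℂ) * (e₂:ℂ)) * (∑ s, ∑ t, ∑ i, ∑ j, P s i * starRingEnd ℂ (Q s j) * (starRingEnd ℂ (P t i) * Q t j)) := by
    simp only [Finset.sum_add_distrib, Finset.mul_sum]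
  rw [hid, hsplit] at hpos
  simp only [Complex.add_re, Complex.mul_re, Complex.mul_im,
    Complex.re_ofNat, Complex.im_ofNat, Complex.ofReal_re, Complex.ofReal_im,
    mul_zero, zero_mul, sub_zero, add_zero, zero_add] at hpos
  linarith


end Stmt18Helper

open Stmt18Helper in

/-- Theorem 5.2: trace inequalities for tensor powers. -/
theorem stmt18 {k : ℕ} (A B C : Matrix (Fin k) (Fin k) ℂ)
    (h : (Matrix.fromBlocks A B Bᴴ C).PosSemidef) (r : ℕ) (hr : 0 < r) :
    (A.trace.re * C.trace.re) ^ r - (Bᴴ.trace * B.trace).re ^ r ≥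
        |((A * C).trace.re) ^ r - ((Bᴴ * B).trace.re) ^ r| ∧
    (A.trace.re * C.trace.re) ^ r + (Bᴴ.trace * B.trace).re ^ r ≥
        ((A * C).trace.re) ^ r + ((Bᴴ * B).trace.re) ^ r := by
  classical
  obtain ⟨N, hN⟩ : ∃ N : Matrix (Fin k ⊕ Fin k) (Fin k ⊕ Fin k) ℂ,
      Matrix.fromBlocks A B Bᴴ C = Nᴴ * N := by
    open scoped MatrixOrder in
    exact CStarAlgebra.nonneg_iff_eq_star_mul_self.mp h.nonneg
  set P : (Fin k ⊕ Fin k) → Fin k → ℂ := fun s i => N s (Sum.inl i) with hPdef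
  set Q : (Fin k ⊕ Fin k) → Fin k → ℂ := fun s i => N s (Sum.inr i) with hQdef
  -- entry formulas
  have hA : ∀ i j, A i j = ∑ s, (starRingEnd ℂ) (P s i) * P s j := by
    intro i j
    have h0 : (Matrix.fromBlocks A B Bᴴ C) (Sum.inl i) (Sum.inl j)
        = (Nᴴ * N) (Sum.inl i) (Sum.inl j) := by rw [hN]
    rw [Matrix.fromBlocks_apply₁₁] at h0
    rw [h0, Matrix.mul_apply]
    exact Finset.sum_congr rfl fun s _ => by
      simp [Matrix.conjTranspose_apply, hPdef, Complex.star_def]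
  have hB : ∀ i j, B i j = ∑ s, (starRingEnd ℂ) (P s i) * Q s j := by
    intro i j
    have h0 : (Matrix.fromBlocks A B Bᴴ C) (Sum.inl i) (Sum.inr j)
        = (Nᴴ * N) (Sum.inl i) (Sum.inr j) := by rw [hN]
    rw [Matrix.fromBlocks_apply₁₂] at h0
    rw [h0, Matrix.mul_apply]
    exact Finset.sum_congr rfl fun s _ => by
      simp [Matrix.conjTranspose_apply, hPdef, hQdef, Complex.star_def]
  have hC : ∀ i j, C i j = ∑ s, (starRingEnd ℂ) (Q s i) * Q s j := by
    intro i j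
    have h0 : (Matrix.fromBlocks A B Bᴴ C) (Sum.inr i) (Sum.inr j)
        = (Nᴴ * N) (Sum.inr i) (Sum.inr j) := by rw [hN]
    rw [Matrix.fromBlocks_apply₂₂] at h0
    rw [h0, Matrix.mul_apply]
    exact Finset.sum_congr rfl fun s _ => by
      simp [Matrix.conjTranspose_apply, hQdef, Complex.star_def]
  -- traces as sums
  have hTrA : A.trace = ∑ s, ∑ i, (starRingEnd ℂ) (P s i) * P s i := by
    have : A.trace = ∑ i, A i i := by simp [Matrix.trace, Matrix.diag_apply]
    rw [this]
    calc (∑ i, A i i) = ∑ i, ∑ s, (starRingEnd ℂ) (P s i) * P s i :=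
          Finset.sum_congr rfl fun i _ => hA i i
      _ = _ := Finset.sum_comm
  have hTrC : C.trace = ∑ s, ∑ i, (starRingEnd ℂ) (Q s i) * Q s i := by
    have : C.trace = ∑ i, C i i := by simp [Matrix.trace, Matrix.diag_apply]
    rw [this]
    calc (∑ i, C i i) = ∑ i, ∑ s, (starRingEnd ℂ) (Q s i) * Q s i :=
          Finset.sum_congr rfl fun i _ => hC i i
      _ = _ := Finset.sum_comm
  have hTrB : B.trace = ∑ s, ∑ i, (starRingEnd ℂ) (P s i) * Q s i := by
    have : B.trace = ∑ i, B i i := by simp [Matrix.trace, Matrix.diag_apply]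
    rw [this]
    calc (∑ i, B i i) = ∑ i, ∑ s, (starRingEnd ℂ) (P s i) * Q s i :=
          Finset.sum_congr rfl fun i _ => hB i i
      _ = _ := Finset.sum_comm
  have hTrBH : Bᴴ.trace = ∑ s, ∑ i, P s i * (starRingEnd ℂ) (Q s i) := by
    rw [Matrix.trace_conjTranspose, hTrB, Complex.star_def, map_sum]
    exact Finset.sum_congr rfl fun s _ => by
      rw [map_sum]
      exact Finset.sum_congr rfl fun i _ => by
        simp only [_root_.map_mul, Complex.conj_conj]
  -- the four quantities
  have T1 : A.trace * C.trace
      = ∑ s, ∑ t, ∑ i, ∑ j, (starRingEnd ℂ) (P s i) * P s i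
          * ((starRingEnd ℂ) (Q t j) * Q t j) := by
    rw [hTrA, hTrC]; exact expand_mul _ _
  have T2 : Bᴴ.trace * B.trace
      = ∑ s, ∑ t, ∑ i, ∑ j, P s i * (starRingEnd ℂ) (Q s i)
          * ((starRingEnd ℂ) (P t j) * Q t j) := by
    rw [hTrBH, hTrB]; exact expand_mul _ _
  have T3 : (A * C).trace
      = ∑ s, ∑ t, ∑ i, ∑ j, (starRingEnd ℂ) (P s i) * P s j
          * ((starRingEnd ℂ) (Q t j) * Q t i) := by
    have hac : (A * C).trace = ∑ i, ∑ j, A i j * C j i := by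
      simp [Matrix.trace, Matrix.diag_apply, Matrix.mul_apply]
    calc (A * C).trace
        = ∑ i, ∑ j, (∑ s, (starRingEnd ℂ) (P s i) * P s j)
            * (∑ t, (starRingEnd ℂ) (Q t j) * Q t i) := by
          rw [hac]
          exact Finset.sum_congr rfl fun i _ => Finset.sum_congr rfl fun j _ => by
            rw [hA, hC]
      _ = ∑ i, ∑ j, ∑ s, ∑ t, (starRingEnd ℂ) (P s i) * P s j
            * ((starRingEnd ℂ) (Q t j) * Q t i) :=
          Finset.sum_congr rfl fun i _ => Finset.sum_congr rfl fun j _ =>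
            Fintype.sum_mul_sum _ _
      _ = _ := sum4_swap_halves _
  have T4 : (Bᴴ * B).trace
      = ∑ s, ∑ t, ∑ i, ∑ j, P s i * (starRingEnd ℂ) (Q s j)
          * ((starRingEnd ℂ) (P t i) * Q t j) := by
    have hbb : (Bᴴ * B).trace = ∑ i, ∑ j, (starRingEnd ℂ) (B j i) * B j i := by
      simp [Matrix.trace, Matrix.diag_apply, Matrix.mul_apply,
        Matrix.conjTranspose_apply, Complex.star_def]
    calc (Bᴴ * B).trace
        = ∑ i, ∑ j, (∑ s, P s j * (starRingEnd ℂ) (Q s i))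
            * (∑ t, (starRingEnd ℂ) (P t j) * Q t i) := by
          rw [hbb]
          refine Finset.sum_congr rfl fun i _ => Finset.sum_congr rfl fun j _ => ?_
          rw [hB j i, _root_.map_sum]
          congr 1
          exact Finset.sum_congr rfl fun s _ => by
            simp only [_root_.map_mul, Complex.conj_conj]
      _ = ∑ i, ∑ j, ∑ s, ∑ t, (P s j * (starRingEnd ℂ) (Q s i))
            * ((starRingEnd ℂ) (P t j) * Q t i) :=
          Finset.sum_congr rfl fun i _ => Finset.sum_congr rfl fun j _ =>
            Fintype.sum_mul_sum _ _
      _ = ∑ s, ∑ t, ∑ i, ∑ j, P s j * (starRingEnd ℂ) (Q s i)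
            * ((starRingEnd ℂ) (P t j) * Q t i) := sum4_swap_halves _
      _ = _ := sum4_swap_ij _
  -- realness of trace A and trace C
  have hreA : A.trace = ((∑ s, ∑ i, Complex.normSq (P s i) : ℝ) : ℂ) := by
    rw [hTrA]; push_cast
    exact Finset.sum_congr rfl fun s _ => Finset.sum_congr rfl fun i _ => by
      rw [mul_comm, Complex.mul_conj]
  have himA : A.trace.im = 0 := by rw [hreA]; exact Complex.ofReal_im _
  have himC : C.trace.im = 0 := by
    have hreC : C.trace = ((∑ s, ∑ i, Complex.normSq (Q s i) : ℝ) : ℂ) := by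
      rw [hTrC]; push_cast
      exact Finset.sum_congr rfl fun s _ => Finset.sum_congr rfl fun i _ => by
        rw [mul_comm, Complex.mul_conj]
    rw [hreC]; exact Complex.ofReal_im _
  have hαeq : (A.trace * C.trace).re = A.trace.re * C.trace.re := by
    rw [Complex.mul_re, himA]; ring
  -- nonnegativity of the three smaller quantities
  have hβ : 0 ≤ (Bᴴ.trace * B.trace).re := by
    have : Bᴴ.trace * B.trace = ((Complex.normSq B.trace : ℝ) : ℂ) := by
      rw [Matrix.trace_conjTranspose, mul_comm, Complex.star_def, Complex.mul_conj]
    rw [this, Complex.ofReal_re]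
    exact Complex.normSq_nonneg _
  have hδ : 0 ≤ (Bᴴ * B).trace.re := by
    have hbb : (Bᴴ * B).trace = ∑ i, ∑ j, (starRingEnd ℂ) (B j i) * B j i := by
      simp [Matrix.trace, Matrix.diag_apply, Matrix.mul_apply,
        Matrix.conjTranspose_apply, Complex.star_def]
    rw [hbb]
    simp only [Complex.re_sum]
    refine Finset.sum_nonneg fun i _ => Finset.sum_nonneg fun j _ => ?_
    rw [mul_comm, Complex.mul_conj, Complex.ofReal_re]
    exact Complex.normSq_nonneg _
  have hγ : 0 ≤ (A * C).trace.re := by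
    have hw : (A * C).trace = ∑ s, ∑ t,
        (starRingEnd ℂ) (∑ i, P s i * (starRingEnd ℂ) (Q t i))
          * (∑ j, P s j * (starRingEnd ℂ) (Q t j)) := by
      rw [T3]
      refine Finset.sum_congr rfl fun s _ => Finset.sum_congr rfl fun t _ => ?_
      rw [_root_.map_sum, Fintype.sum_mul_sum]
      refine Finset.sum_congr rfl fun i _ => Finset.sum_congr rfl fun j _ => ?_
      simp only [_root_.map_mul, Complex.conj_conj]
      ring
    rw [hw]
    simp only [Complex.re_sum]
    refine Finset.sum_nonneg fun s _ => Finset.sum_nonneg fun t _ => ?_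
    rw [mul_comm, Complex.mul_conj, Complex.ofReal_re]
    exact Complex.normSq_nonneg _
  -- the three master inequalities
  have base1 := master P Q (-1) (-1) (Or.inr rfl) (Or.inr rfl)
  have base2 := master P Q (-1) 1 (Or.inr rfl) (Or.inl rfl)
  have base3 := master P Q 1 (-1) (Or.inl rfl) (Or.inr rfl)
  rw [← T1, ← T2, ← T3, ← T4, hαeq] at base1 base2 base3
  -- scalar conclusion
  obtain ⟨hsum, habs⟩ := scalar_main (a := A.trace.re * C.trace.re) hβ hγ hδ
    (by linarith) (abs_sub_le_iff.mpr ⟨by linarith, by linarith⟩) r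
  exact ⟨habs, hsum⟩
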